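/- arXiv:2107.13755 — 7 statements merged into one kernel-verified Lean document; each statement's English description precedes it below -/
import Mathlib

section
/- Let E be a finite-dimensional real inner product space and let a > 0. Define h_a : E → ℝ by h_a(t) = max(‖t‖²/2, a/2). Then for every l ∈ E, the Fenchel conjugate sup_{t ∈ E} (⟨t, l⟩ − h_a(t)) equals √a·‖l‖ − a/2 if ‖l‖ ≤ √a, and equals ‖l‖²/2 if ‖l‖ > √a. -/
open scoped RealInnerProductSpace

/-- Fenchel conjugate of `h_a(t) = max (‖t‖²/2) (a/2)`. -/
theorem fenchel_conjugate_max_quadratic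
    {E : Type*} [NormedAddCommGroup E] [InnerProductSpace ℝ E]
    [FiniteDimensional ℝ E] (a : ℝ) (ha : 0 < a) (l : E) :
    (⨆ t : E, (⟪t, l⟫ - max (‖t‖ ^ 2 / 2) (a / 2))) =
      if ‖l‖ ≤ Real.sqrt a then Real.sqrt a * ‖l‖ - a / 2 else ‖l‖ ^ 2 / 2 := by
  have hsa : 0 < Real.sqrt a := Real.sqrt_pos.mpr ha
  have hsq : Real.sqrt a ^ 2 = a := Real.sq_sqrt ha.le
  set M := if ‖l‖ ≤ Real.sqrt a then Real.sqrt a * ‖l‖ - a / 2 else ‖l‖ ^ 2 / 2 with hM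
  have hub : ∀ t : E, ⟪t, l⟫ - max (‖t‖ ^ 2 / 2) (a / 2) ≤ M := by
    intro t
    have h1 : ⟪t, l⟫ ≤ ‖t‖ * ‖l‖ := real_inner_le_norm t l
    by_cases hl : ‖l‖ ≤ Real.sqrt a
    · rw [hM, if_pos hl]
      rcases le_or_gt ‖t‖ (Real.sqrt a) with ht | ht
      · have hmax : max (‖t‖ ^ 2 / 2) (a / 2) = a / 2 := by
          rw [max_eq_right]
          nlinarith [norm_nonneg t]
        rw [hmax]
        nlinarith [norm_nonneg t, norm_nonneg l]
      · have hmax : ‖t‖ ^ 2 / 2 ≤ max (‖t‖ ^ 2 / 2) (a / 2) := le_max_left _ _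
        nlinarith [norm_nonneg t, norm_nonneg l]
    · push_neg at hl
      rw [hM, if_neg (not_le.mpr hl)]
      have hmax : ‖t‖ ^ 2 / 2 ≤ max (‖t‖ ^ 2 / 2) (a / 2) := le_max_left _ _
      nlinarith [norm_nonneg t, norm_nonneg l, sq_nonneg (‖t‖ - ‖l‖)]
  have hbdd : BddAbove (Set.range fun t : E => ⟪t, l⟫ - max (‖t‖ ^ 2 / 2) (a / 2)) :=
    ⟨M, by rintro x ⟨t, rfl⟩; exact hub t⟩
  refine le_antisymm (ciSup_le hub) ?_
  by_cases hl : ‖l‖ ≤ Real.sqrt a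
  · rw [hM, if_pos hl]
    by_cases hl0 : l = 0
    · have h0 : (⟪(0 : E), l⟫ - max (‖(0 : E)‖ ^ 2 / 2) (a / 2)) = Real.sqrt a * ‖l‖ - a / 2 := by
        simp [hl0, max_eq_right (by positivity : (0:ℝ) ≤ a / 2)]
      calc Real.sqrt a * ‖l‖ - a / 2 = _ := h0.symm
        _ ≤ _ := le_ciSup hbdd (0 : E)
    · have hnl : 0 < ‖l‖ := norm_pos_iff.mpr hl0
      set t₀ : E := (Real.sqrt a / ‖l‖) • l with ht₀
      have hnt : ‖t₀‖ = Real.sqrt a := by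
        rw [ht₀, norm_smul, Real.norm_eq_abs, abs_of_pos (by positivity)]
        field_simp
      have hip : ⟪t₀, l⟫ = Real.sqrt a * ‖l‖ := by
        rw [ht₀, real_inner_smul_left, real_inner_self_eq_norm_sq]
        field_simp
      have h0 : (⟪t₀, l⟫ - max (‖t₀‖ ^ 2 / 2) (a / 2)) = Real.sqrt a * ‖l‖ - a / 2 := by
        rw [hip, hnt, hsq, max_self]
      calc Real.sqrt a * ‖l‖ - a / 2 = _ := h0.symm
        _ ≤ _ := le_ciSup hbdd t₀
  · push_neg at hl
    rw [hM, if_neg (not_le.mpr hl)]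
    have hgt : a < ‖l‖ ^ 2 := by nlinarith
    have h0 : (⟪l, l⟫ - max (‖l‖ ^ 2 / 2) (a / 2)) = ‖l‖ ^ 2 / 2 := by
      rw [real_inner_self_eq_norm_sq, max_eq_left (by linarith)]
      ring
    calc ‖l‖ ^ 2 / 2 = _ := h0.symm
      _ ≤ _ := le_ciSup hbdd l
end

section
/- Let E be a finite-dimensional real inner product space and let a > 0. Define h_a^* : E → ℝ by h_a^*(l) = √a·‖l‖ − a/2 if ‖l‖ ≤ √a, and h_a^*(l) = ‖l‖²/2 if ‖l‖ > √a. Then for every t ∈ E, sup_{l ∈ E} (⟨t, l⟩ − h_a^*(l)) = max(‖t‖²/2, a/2). -/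
open scoped RealInnerProductSpace

/-- The Fenchel conjugate of `h_a^*` recovers `h_a(t) = max (‖t‖²/2) (a/2)`. -/
theorem fenchel_biconjugate_max_quadratic
    {E : Type*} [NormedAddCommGroup E] [InnerProductSpace ℝ E]
    [FiniteDimensional ℝ E] (a : ℝ) (ha : 0 < a) (t : E) :
    (⨆ l : E, (⟪t, l⟫ -
        (if ‖l‖ ≤ Real.sqrt a then Real.sqrt a * ‖l‖ - a / 2 else ‖l‖ ^ 2 / 2))) =
      max (‖t‖ ^ 2 / 2) (a / 2) := by
  have hs : Real.sqrt a ^ 2 = a := Real.sq_sqrt ha.le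
  have hs0 : 0 ≤ Real.sqrt a := Real.sqrt_nonneg a
  have ht0 : 0 ≤ ‖t‖ := norm_nonneg t
  have hub : ∀ l : E, (⟪t, l⟫ -
      (if ‖l‖ ≤ Real.sqrt a then Real.sqrt a * ‖l‖ - a / 2 else ‖l‖ ^ 2 / 2)) ≤
      max (‖t‖ ^ 2 / 2) (a / 2) := by
    intro l
    have h1 := real_inner_le_norm t l
    have hl0 : 0 ≤ ‖l‖ := norm_nonneg l
    split_ifs with h
    · rcases le_or_gt ‖t‖ (Real.sqrt a) with h2 | h2
      · refine le_trans ?_ (le_max_right _ _)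
        nlinarith [mul_nonneg (sub_nonneg.mpr h2) hl0]
      · refine le_trans ?_ (le_max_left _ _)
        nlinarith [mul_nonneg (sub_nonneg.mpr h2.le) (sub_nonneg.mpr h),
          sq_nonneg (‖t‖ - Real.sqrt a)]
    · refine le_trans ?_ (le_max_left _ _)
      nlinarith [sq_nonneg (‖t‖ - ‖l‖)]
  have hbdd : BddAbove (Set.range fun l : E => (⟪t, l⟫ -
      (if ‖l‖ ≤ Real.sqrt a then Real.sqrt a * ‖l‖ - a / 2 else ‖l‖ ^ 2 / 2))) :=
    ⟨max (‖t‖ ^ 2 / 2) (a / 2), by rintro x ⟨l, rfl⟩; exact hub l⟩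
  refine le_antisymm (ciSup_le hub) ?_
  rcases le_or_gt (Real.sqrt a) ‖t‖ with h2 | h2
  · have hmax : max (‖t‖ ^ 2 / 2) (a / 2) = ‖t‖ ^ 2 / 2 := by
      apply max_eq_left
      nlinarith
    rw [hmax]
    refine le_trans ?_ (le_ciSup hbdd t)
    rw [real_inner_self_eq_norm_sq]
    split_ifs with h
    · have : ‖t‖ = Real.sqrt a := le_antisymm h h2
      rw [this]
      nlinarith
    · linarith
  · have hmax : max (‖t‖ ^ 2 / 2) (a / 2) = a / 2 := by
      apply max_eq_right
      nlinarith
    rw [hmax]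
    refine le_trans ?_ (le_ciSup hbdd 0)
    simp [ha.le, hs0]
end

section
/- Let μ > 0, λ > 0, let I be a finite index set, and let g : I → ℝ² be any family of vectors (the values of the discrete gradient). Define H(l; a) = √a·‖l‖ − ‖l‖²/2 if ‖l‖ ≤ √a, and H(l; a) = a/2 if ‖l‖ > √a, for l ∈ ℝ². Then Σ_{i ∈ I} (μ/2)·min(‖g_i‖², λ/μ) = inf over all families l : I → ℝ² of Σ_{i ∈ I} [ (μ/2)·‖g_i − l_i‖² + μ·H(l_i; λ/μ) ]. (This is the equivalence of the isotropic truncated quadratic regularizer with the Geman–Yang half-quadratic form.) -/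
lemma gy_aux (s : ℝ) (hs : 0 ≤ s) (g l : EuclideanSpace ℝ (Fin 2)) :
    min (‖g‖ ^ 2) (s ^ 2) ≤ ‖g - l‖ ^ 2 +
      2 * (if ‖l‖ ≤ s then s * ‖l‖ - ‖l‖ ^ 2 / 2 else s ^ 2 / 2) := by
  have h1 : |‖g‖ - ‖l‖| ≤ ‖g - l‖ := abs_norm_sub_norm_le g l
  have h2 : (‖g‖ - ‖l‖) ^ 2 ≤ ‖g - l‖ ^ 2 := by
    calc (‖g‖ - ‖l‖) ^ 2 = |‖g‖ - ‖l‖| ^ 2 := (sq_abs _).symm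
      _ ≤ ‖g - l‖ ^ 2 := pow_le_pow_left₀ (abs_nonneg _) h1 2
  rcases le_or_gt (‖g‖) s with hg | hg
  · have hmin : min (‖g‖ ^ 2) (s ^ 2) = ‖g‖ ^ 2 :=
      min_eq_left (by nlinarith [norm_nonneg g])
    rw [hmin]
    split_ifs with h
    · nlinarith [norm_nonneg l]
    · push_neg at h; nlinarith [norm_nonneg l]
  · have hmin : min (‖g‖ ^ 2) (s ^ 2) = s ^ 2 :=
      min_eq_right (by nlinarith [norm_nonneg g])
    rw [hmin]
    split_ifs with h
    · nlinarith [norm_nonneg l]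
    · nlinarith [sq_nonneg ‖g - l‖]

/-- Equivalence of the isotropic truncated quadratic regularizer with the
Geman–Yang half-quadratic form. -/
theorem truncated_quadratic_eq_geman_yang
    {I : Type*} [Fintype I] (μ lam : ℝ) (hμ : 0 < μ) (hlam : 0 < lam)
    (g : I → EuclideanSpace ℝ (Fin 2)) :
    (∑ i : I, (μ / 2) * min (‖g i‖ ^ 2) (lam / μ)) =
      ⨅ l : I → EuclideanSpace ℝ (Fin 2),
        ∑ i : I, ((μ / 2) * ‖g i - l i‖ ^ 2 +
          μ * (if ‖l i‖ ≤ Real.sqrt (lam / μ) then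
                Real.sqrt (lam / μ) * ‖l i‖ - ‖l i‖ ^ 2 / 2
              else (lam / μ) / 2)) := by
  set a := lam / μ with ha
  have ha0 : 0 < a := div_pos hlam hμ
  set s := Real.sqrt a with hsdef
  have hs : 0 ≤ s := Real.sqrt_nonneg a
  have hs2 : s ^ 2 = a := Real.sq_sqrt ha0.le
  have key : ∀ (l : I → EuclideanSpace ℝ (Fin 2)),
      (∑ i : I, (μ / 2) * min (‖g i‖ ^ 2) a) ≤
      ∑ i : I, ((μ / 2) * ‖g i - l i‖ ^ 2 +
        μ * (if ‖l i‖ ≤ s then s * ‖l i‖ - ‖l i‖ ^ 2 / 2 else a / 2)) := by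
    intro l
    refine Finset.sum_le_sum fun i _ => ?_
    have k := gy_aux s hs (g i) (l i)
    rw [hs2] at k
    split_ifs at k ⊢ with h
    · nlinarith
    · nlinarith
  apply le_antisymm
  · exact le_ciInf key
  · set l₀ : I → EuclideanSpace ℝ (Fin 2) := fun i => if ‖g i‖ ≤ s then 0 else g i
      with hl₀
    have hb : BddBelow (Set.range fun l : I → EuclideanSpace ℝ (Fin 2) =>
        ∑ i : I, ((μ / 2) * ‖g i - l i‖ ^ 2 +
          μ * (if ‖l i‖ ≤ s then s * ‖l i‖ - ‖l i‖ ^ 2 / 2 else a / 2))) :=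
      ⟨∑ i : I, (μ / 2) * min (‖g i‖ ^ 2) a, by rintro x ⟨l, rfl⟩; exact key l⟩
    refine le_trans (ciInf_le hb l₀) (le_of_eq ?_)
    refine Finset.sum_congr rfl fun i _ => ?_
    by_cases h : ‖g i‖ ≤ s
    · have hz : l₀ i = 0 := by simp [hl₀, h]
      have hmin : min (‖g i‖ ^ 2) a = ‖g i‖ ^ 2 :=
        min_eq_left (by nlinarith [norm_nonneg (g i)])
      rw [hz, hmin]
      simp [hs]
    · have hz : l₀ i = g i := by simp [hl₀, h]
      have hmin : min (‖g i‖ ^ 2) a = a :=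
        min_eq_right (by push_neg at h; nlinarith [norm_nonneg (g i)])
      rw [hz, hmin]
      simp [h]
      ring
end

section
/- Let E be a finite-dimensional real inner product space, let a > 0, τ > 0, and define h_a^*(l) = √a·‖l‖ − a/2 if ‖l‖ ≤ √a, h_a^*(l) = ‖l‖²/2 if ‖l‖ > √a. For every l̂ ∈ E, the function l ↦ h_a^*(l) + (1/(2τ))·‖l − l̂‖² has a unique global minimizer l⁺, given by: l⁺ = 0 if ‖l̂‖ ≤ τ√a; l⁺ = l̂ − τ√a·l̂/‖l̂‖ if τ√a < ‖l̂‖ < (1+τ)√a; and l⁺ = l̂/(1+τ) if ‖l̂‖ ≥ (1+τ)√a. (This closed form is the auxiliary-variable update of the Geman–Yang model.) -/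
set_option maxHeartbeats 1000000 in
/-- Closed form of the proximal map of `h_a^*` (the auxiliary-variable update of
the Geman–Yang model): the unique minimizer of
`l ↦ h_a^*(l) + (1/(2τ))‖l − l̂‖²` is given by soft-thresholding. -/
theorem geman_yang_prox_update
    {E : Type*} [NormedAddCommGroup E] [InnerProductSpace ℝ E]
    [FiniteDimensional ℝ E] (a τ : ℝ) (ha : 0 < a) (hτ : 0 < τ)
    (lhat : E)
    (f : E → ℝ)
    (hf : ∀ l, f l = (if ‖l‖ ≤ Real.sqrt a then Real.sqrt a * ‖l‖ - a / 2
        else ‖l‖ ^ 2 / 2) + (1 / (2 * τ)) * ‖l - lhat‖ ^ 2)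
    (lplus : E)
    (hlplus : lplus =
      if ‖lhat‖ ≤ τ * Real.sqrt a then 0
      else if ‖lhat‖ < (1 + τ) * Real.sqrt a then
        lhat - (τ * Real.sqrt a / ‖lhat‖) • lhat
      else (1 / (1 + τ)) • lhat) :
    (∀ l, f lplus ≤ f l) ∧ (∀ l, (∀ l', f l ≤ f l') → l = lplus) := by
  obtain ⟨s, hsdef⟩ : ∃ s, s = Real.sqrt a := ⟨_, rfl⟩
  rw [← hsdef] at hf hlplus
  have hs : 0 < s := hsdef ▸ Real.sqrt_pos.2 ha
  have hsa : s ^ 2 = a := hsdef ▸ Real.sq_sqrt ha.le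
  subst hsa
  obtain ⟨b, hbdef⟩ : ∃ b, b = ‖lhat‖ := ⟨_, rfl⟩
  rw [← hbdef] at hlplus
  have hb : 0 ≤ b := hbdef ▸ norm_nonneg _
  obtain ⟨ψ, hψdef⟩ : ∃ ψ : ℝ → ℝ, ∀ r, ψ r =
      2 * τ * (if r ≤ s then s * r - s ^ 2 / 2 else r ^ 2 / 2)
        + (r ^ 2 - 2 * b * r + b ^ 2) := ⟨_, fun _ => rfl⟩
  have hτ1 : 0 < 1 + τ := by linarith
  have h2τ : (0:ℝ) < 2 * τ := by linarith
  -- exact identity relating f and ψ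
  have hfψ : ∀ l : E, 2 * τ * f l = ψ ‖l‖ + 2 * (‖l‖ * b - (inner ℝ l lhat : ℝ)) := by
    intro l
    have hns : ‖l - lhat‖ ^ 2 = ‖l‖ ^ 2 - 2 * (inner ℝ l lhat : ℝ) + ‖lhat‖ ^ 2 :=
      norm_sub_sq_real l lhat
    rw [hf, hns, hψdef, ← hbdef]
    by_cases h : ‖l‖ ≤ s <;> simp only [h, if_true, if_false] <;> field_simp <;> ring
  have hCS : ∀ l : E, (inner ℝ l lhat : ℝ) ≤ ‖l‖ * b := by
    intro l; rw [hbdef]; exact real_inner_le_norm l lhat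
  have hlb : ∀ l : E, ψ ‖l‖ ≤ 2 * τ * f l := by
    intro l
    have := hCS l
    rw [hfψ l]; linarith
  by_cases h1 : b ≤ τ * s
  · -- lplus = 0
    rw [if_pos h1] at hlplus
    subst hlplus
    have hψ0 : ψ 0 = 2 * τ * (-(s ^ 2 / 2)) + b ^ 2 := by
      rw [hψdef, if_pos hs.le]; ring
    have hval : 2 * τ * f 0 = ψ 0 := by
      rw [hfψ 0]; simp
    have hkey : ∀ r : ℝ, 0 ≤ r → r ^ 2 ≤ (1 + τ) * (ψ r - ψ 0) := by
      intro r hr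
      rw [hψ0, hψdef]
      split_ifs with h
      · nlinarith [mul_nonneg (mul_nonneg hτ1.le hr) (sub_nonneg.2 h1),
          mul_nonneg hτ.le (sq_nonneg r)]
      · push_neg at h
        nlinarith [mul_nonneg (mul_nonneg hτ1.le (sub_nonneg.2 h1)) hr,
          mul_nonneg (mul_nonneg hτ1.le hτ.le) (sq_nonneg (r - s)),
          mul_nonneg hτ.le (sq_nonneg r)]
    have hmin : ∀ l, f 0 ≤ f l := by
      intro l
      have h1' := hlb l
      have h2' := hkey ‖l‖ (norm_nonneg l)
      have : 2 * τ * f 0 ≤ 2 * τ * f l := by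
        rw [hval]; nlinarith [sq_nonneg ‖l‖]
      exact le_of_mul_le_mul_left this h2τ
    refine ⟨hmin, fun l hl => ?_⟩
    have hle := mul_le_mul_of_nonneg_left (hl 0) h2τ.le
    have h1' := hlb l
    have h2' := hkey ‖l‖ (norm_nonneg l)
    have hn : ‖l‖ ^ 2 ≤ 0 := by nlinarith
    have : ‖l‖ = 0 := by nlinarith [sq_nonneg ‖l‖, norm_nonneg l]
    exact norm_eq_zero.1 this
  · push_neg at h1
    have hb0 : 0 < b := lt_trans (by positivity) h1
    by_cases h2 : b < (1 + τ) * s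
    · -- middle case
      rw [if_neg (not_le.2 h1), if_pos h2] at hlplus
      obtain ⟨rp, hrp⟩ : ∃ rp : ℝ, rp = b - τ * s := ⟨_, rfl⟩
      have hrp0 : 0 < rp := by rw [hrp]; linarith
      have hrps : rp < s := by rw [hrp]; nlinarith
      have hlp : lplus = (rp / b) • lhat := by
        rw [hlplus, hrp, sub_div, div_self hb0.ne', sub_smul, one_smul]
      have hnlp : ‖lplus‖ = rp := by
        rw [hlp, norm_smul, Real.norm_eq_abs, abs_of_pos (by positivity), ← hbdef,
          div_mul_cancel₀ _ hb0.ne']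
      have hinlp : (inner ℝ lplus lhat : ℝ) = rp * b := by
        rw [hlp, real_inner_smul_left, real_inner_self_eq_norm_sq, ← hbdef]
        field_simp
      have hval : 2 * τ * f lplus = ψ rp := by
        rw [hfψ, hnlp, hinlp]; ring
      have hψp : ψ rp = 2 * τ * (s * rp - s ^ 2 / 2) + (rp ^ 2 - 2 * b * rp + b ^ 2) := by
        rw [hψdef, if_pos hrps.le]
      have hkey : ∀ r : ℝ, 0 ≤ r → (r - rp) ^ 2 ≤ (1 + τ) * (ψ r - ψ rp) := by
        intro r hr
        rw [hψp, hψdef]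
        split_ifs with h
        · rw [hrp]
          nlinarith [mul_nonneg hτ.le (sq_nonneg (r - (b - τ * s)))]
        · push_neg at h
          rw [hrp]
          nlinarith [mul_nonneg hτ.le (sq_nonneg (r - s)),
            mul_nonneg (mul_nonneg hτ.le hτ.le) (sq_nonneg (r - s)),
            mul_nonneg (mul_nonneg hτ.le (sub_nonneg.2 h.le)) (sub_nonneg.2 h2.le),
            mul_nonneg hτ.le (sq_nonneg ((1 + τ) * s - b))]
      have hmin : ∀ l, f lplus ≤ f l := by
        intro l
        have h1' := hlb l
        have h2' := hkey ‖l‖ (norm_nonneg l)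
        have : 2 * τ * f lplus ≤ 2 * τ * f l := by
          rw [hval]; nlinarith [sq_nonneg (‖l‖ - rp)]
        exact le_of_mul_le_mul_left this h2τ
      refine ⟨hmin, fun l hl => ?_⟩
      have hle := mul_le_mul_of_nonneg_left (hl lplus) h2τ.le
      have h1' := hlb l
      have h2' := hkey ‖l‖ (norm_nonneg l)
      have h3' := hfψ l
      have h4' := hCS l
      have hle2 : 2 * τ * f l ≤ ψ rp := by rw [← hval]; linarith
      have hnl : ‖l‖ = rp := by nlinarith [sq_nonneg (‖l‖ - rp)]
      have hinner : (inner ℝ l lhat : ℝ) = ‖l‖ * ‖lhat‖ := by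
        rw [← hbdef]; nlinarith
      have heq : ‖lhat‖ • l = ‖l‖ • lhat := inner_eq_norm_mul_iff_real.1 hinner
      rw [← hbdef, hnl] at heq
      have : (b⁻¹ * b) • l = (b⁻¹ * rp) • lhat := by
        rw [mul_smul, mul_smul, heq]
      rw [inv_mul_cancel₀ hb0.ne', one_smul] at this
      rw [this, hlp, mul_comm, div_eq_mul_inv]
    · -- outer case
      push_neg at h2
      rw [if_neg (not_le.2 h1), if_neg (not_lt.2 h2)] at hlplus
      obtain ⟨rp, hrp⟩ : ∃ rp : ℝ, rp = b / (1 + τ) := ⟨_, rfl⟩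
      have hrpb : (1 + τ) * rp = b := by rw [hrp]; field_simp
      have hrps : s ≤ rp := by rw [hrp, le_div_iff₀ hτ1]; linarith
      have hrp0 : 0 < rp := lt_of_lt_of_le hs hrps
      have hlp : lplus = (rp / b) • lhat := by
        rw [hlplus, hrp]
        congr 1
        field_simp
      have hnlp : ‖lplus‖ = rp := by
        rw [hlp, norm_smul, Real.norm_eq_abs, abs_of_pos (by positivity), ← hbdef,
          div_mul_cancel₀ _ hb0.ne']
      have hinlp : (inner ℝ lplus lhat : ℝ) = rp * b := by
        rw [hlp, real_inner_smul_left, real_inner_self_eq_norm_sq, ← hbdef]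
        field_simp
      have hval : 2 * τ * f lplus = ψ rp := by
        rw [hfψ, hnlp, hinlp]; ring
      have hψp : ψ rp = 2 * τ * (rp ^ 2 / 2) + (rp ^ 2 - 2 * b * rp + b ^ 2) := by
        rw [hψdef]
        split_ifs with h
        · have : rp = s := le_antisymm h hrps
          rw [this]; ring
        · ring_nf
      have hkey : ∀ r : ℝ, 0 ≤ r → (r - rp) ^ 2 ≤ (1 + τ) * (ψ r - ψ rp) := by
        intro r hr
        have hx : 0 ≤ rp - s := sub_nonneg.2 hrps
        rw [hψp, hψdef, ← hrpb]
        split_ifs with h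
        · have hy : 0 ≤ s - r := sub_nonneg.2 h
          nlinarith [mul_nonneg hτ.le (sq_nonneg (s - r)),
            mul_nonneg (mul_nonneg hτ.le hy) hx,
            mul_nonneg (mul_nonneg (mul_nonneg hτ.le hτ.le) hy) hx,
            mul_nonneg hτ.le (sq_nonneg (rp - s)),
            mul_nonneg (mul_nonneg hτ.le hτ.le) (sq_nonneg (rp - s))]
        · nlinarith [mul_nonneg hτ.le (sq_nonneg (r - rp)),
            mul_nonneg (mul_nonneg hτ.le hτ.le) (sq_nonneg (r - rp))]
      have hmin : ∀ l, f lplus ≤ f l := by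
        intro l
        have h1' := hlb l
        have h2' := hkey ‖l‖ (norm_nonneg l)
        have : 2 * τ * f lplus ≤ 2 * τ * f l := by
          rw [hval]; nlinarith [sq_nonneg (‖l‖ - rp)]
        exact le_of_mul_le_mul_left this h2τ
      refine ⟨hmin, fun l hl => ?_⟩
      have hle := mul_le_mul_of_nonneg_left (hl lplus) h2τ.le
      have h1' := hlb l
      have h2' := hkey ‖l‖ (norm_nonneg l)
      have h3' := hfψ l
      have h4' := hCS l
      have hle2 : 2 * τ * f l ≤ ψ rp := by rw [← hval]; linarith
      have hnl : ‖l‖ = rp := by nlinarith [sq_nonneg (‖l‖ - rp)]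
      have hinner : (inner ℝ l lhat : ℝ) = ‖l‖ * ‖lhat‖ := by
        rw [← hbdef]; nlinarith
      have heq : ‖lhat‖ • l = ‖l‖ • lhat := inner_eq_norm_mul_iff_real.1 hinner
      rw [← hbdef, hnl] at heq
      have : (b⁻¹ * b) • l = (b⁻¹ * rp) • lhat := by
        rw [mul_smul, mul_smul, heq]
      rw [inv_mul_cancel₀ hb0.ne', one_smul] at this
      rw [this, hlp, mul_comm, div_eq_mul_inv]
end

section
/- Let ξ ≥ 0 and b₀ ∈ (0, 1], and set p = ξ + 1 − b₀ (so p ≥ 0) and Δ = 1/4 + p³/27. Then x = (1/2 + √Δ)^{1/3} − (√Δ − 1/2)^{1/3} satisfies x³ + p·x = 1 and 0 < x ≤ 1. (Hence the Geman–McClure auxiliary-variable proximal update b = x², which solves ξ + 1 − 1/√b + b − b₀ = 0, remains in (0, 1].) -/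
/-- Cardano's formula for the Geman–McClure auxiliary-variable update: the root
`x = (1/2 + √Δ)^{1/3} − (√Δ − 1/2)^{1/3}` of the depressed cubic
`x³ + p·x = 1` satisfies `0 < x ≤ 1`. -/
theorem geman_mcclure_cardano_root
    (ξ b0 : ℝ) (hξ : 0 ≤ ξ) (hb0 : b0 ∈ Set.Ioc (0 : ℝ) 1)
    (p Δ : ℝ) (hp : p = ξ + 1 - b0) (hΔ : Δ = 1 / 4 + p ^ 3 / 27)
    (x : ℝ)
    (hx : x = (1 / 2 + Real.sqrt Δ) ^ ((1 : ℝ) / 3) -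
      (Real.sqrt Δ - 1 / 2) ^ ((1 : ℝ) / 3)) :
    x ^ 3 + p * x = 1 ∧ 0 < x ∧ x ≤ 1 := by
  obtain ⟨hb0l, hb0r⟩ := hb0
  have hp0 : 0 ≤ p := by nlinarith
  have hΔ4 : (1 : ℝ) / 4 ≤ Δ := by nlinarith [pow_nonneg hp0 3]
  have hΔ0 : 0 ≤ Δ := by linarith
  have hs2 : Real.sqrt Δ ^ 2 = Δ := Real.sq_sqrt hΔ0
  have hs : (1 : ℝ) / 2 ≤ Real.sqrt Δ := by
    have h := Real.sqrt_le_sqrt hΔ4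
    rwa [show (1 : ℝ) / 4 = (1 / 2) ^ 2 by norm_num,
      Real.sqrt_sq (by norm_num : (0:ℝ) ≤ 1/2)] at h
  set s := Real.sqrt Δ with hsdef
  have hA : (0 : ℝ) ≤ 1 / 2 + s := by linarith
  have hB : (0 : ℝ) ≤ s - 1 / 2 := by linarith
  set u := (1 / 2 + s) ^ ((1 : ℝ) / 3) with hu
  set v := (s - 1 / 2) ^ ((1 : ℝ) / 3) with hv
  have hu3 : u ^ 3 = 1 / 2 + s := by
    rw [hu, ← Real.rpow_natCast ((1 / 2 + s) ^ ((1 : ℝ) / 3)) 3,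
      ← Real.rpow_mul hA]
    norm_num
  have hv3 : v ^ 3 = s - 1 / 2 := by
    rw [hv, ← Real.rpow_natCast ((s - 1 / 2) ^ ((1 : ℝ) / 3)) 3,
      ← Real.rpow_mul hB]
    norm_num
  have hABmul : (1 / 2 + s) * (s - 1 / 2) = (p / 3) ^ 3 := by
    have : s ^ 2 = Δ := hs2
    nlinarith [this]
  have huv : u * v = p / 3 := by
    rw [hu, hv, ← Real.mul_rpow hA hB, hABmul,
      ← Real.rpow_natCast (p / 3) 3, ← Real.rpow_mul (by positivity : (0:ℝ) ≤ p / 3)]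
    norm_num
  have key : x ^ 3 + p * x = 1 := by
    rw [hx]
    linear_combination hu3 - hv3 + (3 * v - 3 * u) * huv
  have hxpos : 0 < x := by
    rcases le_or_gt x 0 with h | h
    · nlinarith [mul_nonneg (mul_nonneg (neg_nonneg.2 h) (neg_nonneg.2 h)) (neg_nonneg.2 h),
        mul_nonneg hp0 (neg_nonneg.2 h)]
    · exact h
  refine ⟨key, hxpos, ?_⟩
  by_contra h
  push_neg at h
  nlinarith [mul_pos (mul_pos hxpos hxpos) hxpos, mul_nonneg hp0 hxpos.le]
end

section
/- Let μ > 0, ξ ≥ 0, and b₀ ∈ (0, 1], and set a = ξ + 1 − b₀ (so a ≥ 0). Then b⁺ = (−a + √(a² + 4))/2 is the unique positive root of b² + a·b − 1 = 0, it satisfies 0 < b⁺ ≤ 1, and it is the unique minimizer over b > 0 of the function g(b) = (μ/2)·(ξ·b + b − log b − 1) + (μ/4)·(b − b₀)². (This is the auxiliary-variable update of the Hebert–Leahy model, which stays in (0, 1].) -/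
/-- The auxiliary-variable update of the Hebert–Leahy model:
`b⁺ = (−a + √(a²+4))/2` is the unique positive root of `b² + a·b − 1 = 0`,
lies in `(0,1]`, and is the unique minimizer over `b > 0` of
`g(b) = (μ/2)(ξb + b − log b − 1) + (μ/4)(b − b₀)²`. -/
theorem hebert_leahy_prox_update
    (μ ξ b0 : ℝ) (hμ : 0 < μ) (hξ : 0 ≤ ξ) (hb0 : b0 ∈ Set.Ioc (0 : ℝ) 1)
    (a : ℝ) (ha : a = ξ + 1 - b0)
    (g : ℝ → ℝ)
    (hg : ∀ b, g b = (μ / 2) * (ξ * b + b - Real.log b - 1) +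
      (μ / 4) * (b - b0) ^ 2)
    (bplus : ℝ) (hbplus : bplus = (-a + Real.sqrt (a ^ 2 + 4)) / 2) :
    (bplus ^ 2 + a * bplus - 1 = 0) ∧
    (∀ b, 0 < b → b ^ 2 + a * b - 1 = 0 → b = bplus) ∧
    (0 < bplus ∧ bplus ≤ 1) ∧
    (∀ b, 0 < b → g bplus ≤ g b) ∧
    (∀ b, 0 < b → (∀ b', 0 < b' → g b ≤ g b') → b = bplus) := by
  obtain ⟨hb0pos, hb0le⟩ := hb0
  have ha0 : 0 ≤ a := by rw [ha]; linarith
  have hs2 : (Real.sqrt (a ^ 2 + 4)) ^ 2 = a ^ 2 + 4 :=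
    Real.sq_sqrt (by positivity)
  have hsnn : 0 ≤ Real.sqrt (a ^ 2 + 4) := Real.sqrt_nonneg _
  have hsgt : a < Real.sqrt (a ^ 2 + 4) := by nlinarith
  have hppos : 0 < bplus := by rw [hbplus]; linarith
  have hroot : bplus ^ 2 + a * bplus - 1 = 0 := by rw [hbplus]; nlinarith
  have hple : bplus ≤ 1 := by nlinarith
  have key : ∀ b, 0 < b → g bplus + (μ / 4) * (b - bplus) ^ 2 ≤ g b := by
    intro b hb
    have hlog : Real.log b - Real.log bplus ≤ b / bplus - 1 := by
      rw [← Real.log_div hb.ne' hppos.ne']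
      exact Real.log_le_sub_one_of_pos (div_pos hb hppos)
    have hlog' : bplus * (Real.log b - Real.log bplus) ≤ b - bplus := by
      have h := mul_le_mul_of_nonneg_left hlog hppos.le
      have h2 : bplus * (b / bplus - 1) = b - bplus := by field_simp
      linarith [h.trans_eq h2]
    have hid : bplus * g b - bplus * g bplus - bplus * ((μ / 4) * (b - bplus) ^ 2)
        = (μ / 2) * ((b - bplus) - bplus * (Real.log b - Real.log bplus)) := by
      rw [hg b, hg bplus]
      linear_combination (μ / 2) * (b - bplus) * hroot - (μ / 2) * (b - bplus) * bplus * ha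
    have hnn : 0 ≤ (μ / 2) * ((b - bplus) - bplus * (Real.log b - Real.log bplus)) :=
      mul_nonneg (by positivity) (by linarith)
    have hfin : bplus * (g bplus + (μ / 4) * (b - bplus) ^ 2) ≤ bplus * g b := by
      nlinarith [hid, hnn]
    exact le_of_mul_le_mul_left hfin hppos
  refine ⟨hroot, ?_, ⟨hppos, hple⟩, ?_, ?_⟩
  · intro b hb hbr
    have : (b - bplus) * (b + bplus + a) = 0 := by nlinarith
    have hpos : 0 < b + bplus + a := by linarith
    rcases mul_eq_zero.1 this with h | h
    · linarith
    · linarith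
  · intro b hb
    have := key b hb
    nlinarith [sq_nonneg (b - bplus)]
  · intro b hb hmin
    have h1 := key b hb
    have h2 := hmin bplus hppos
    have : (b - bplus) ^ 2 ≤ 0 := by nlinarith
    have := sq_nonneg (b - bplus)
    have : (b - bplus) ^ 2 = 0 := le_antisymm ‹_› ‹_›
    have := pow_eq_zero_iff (n := 2) (by norm_num) |>.1 this
    linarith
end

section
/- Let A : ℝⁿ → ℝᵐ be an injective linear map, u₀ ∈ ℝᵐ, μ > 0, λ > 0, let I be a finite index set, and for each i ∈ I let ∇ᵢ : ℝⁿ → ℝ² be a linear map. Define H(l; a) = √a·‖l‖ − ‖l‖²/2 if ‖l‖ ≤ √a and H(l; a) = a/2 if ‖l‖ > √a (note H ≥ 0), and define the Geman–Yang functional L_GY(u, l) = (1/2)·‖A u − u₀‖² + Σ_{i ∈ I} [ (μ/2)·‖∇ᵢ u − l_i‖² + μ·H(l_i; λ/μ) ] for u ∈ ℝⁿ and l : I → ℝ². Then L_GY is coercive on ℝⁿ × (I → ℝ²): for every c ∈ ℝ, the sublevel set {(u, l) : L_GY(u, l) ≤ c} is bounded. (In particular, any sequence (uᵏ, lᵏ)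 along which L_GY is nonincreasing is bounded.) -/
open Bornology

set_option maxHeartbeats 1000000 in
/-- Coercivity of the Geman–Yang functional `L_GY(u, l)`: all its sublevel sets
are bounded. -/
theorem geman_yang_coercive
    {n m : ℕ} {I : Type*} [Fintype I]
    (A : EuclideanSpace ℝ (Fin n) →ₗ[ℝ] EuclideanSpace ℝ (Fin m))
    (hA : Function.Injective A)
    (u0 : EuclideanSpace ℝ (Fin m))
    (μ lam : ℝ) (hμ : 0 < μ) (hlam : 0 < lam)
    (grad : I → (EuclideanSpace ℝ (Fin n) →ₗ[ℝ] EuclideanSpace ℝ (Fin 2)))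
    (LGY : EuclideanSpace ℝ (Fin n) → (I → EuclideanSpace ℝ (Fin 2)) → ℝ)
    (hLGY : ∀ u l, LGY u l = (1 / 2) * ‖A u - u0‖ ^ 2 +
      ∑ i : I, ((μ / 2) * ‖grad i u - l i‖ ^ 2 +
        μ * (if ‖l i‖ ≤ Real.sqrt (lam / μ) then
              Real.sqrt (lam / μ) * ‖l i‖ - ‖l i‖ ^ 2 / 2
            else (lam / μ) / 2))) :
    ∀ c : ℝ,
      IsBounded {p : EuclideanSpace ℝ (Fin n) × (I → EuclideanSpace ℝ (Fin 2)) |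
        LGY p.1 p.2 ≤ c} := by
  intro c
  classical
  -- antilipschitz bound for A
  obtain ⟨Cf, hCf0, hAu⟩ : ∃ C : ℝ, 0 ≤ C ∧ ∀ u, ‖u‖ ≤ C * ‖A u‖ := by
    set e := LinearEquiv.ofInjective A hA with he
    set f := (e.symm : LinearMap.range A →ₗ[ℝ] EuclideanSpace ℝ (Fin n)).toContinuousLinearMap
      with hf
    refine ⟨‖f‖, norm_nonneg f, fun u => ?_⟩
    have h1 : f (e u) = u := by
      simp [hf, he]
    have h2 : ‖(e u : EuclideanSpace ℝ (Fin m))‖ = ‖A u‖ := by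
      simp [he, LinearEquiv.ofInjective_apply]
    calc ‖u‖ = ‖f (e u)‖ := by rw [h1]
      _ ≤ ‖f‖ * ‖e u‖ := f.le_opNorm _
      _ = ‖f‖ * ‖A u‖ := by rw [← h2]; rfl
  obtain ⟨Cg, hCg0, hCgi⟩ : ∃ C : ℝ, 0 ≤ C ∧ ∀ (i : I) u, ‖grad i u‖ ≤ C * ‖u‖ := by
    refine ⟨∑ i : I, ‖(grad i).toContinuousLinearMap‖,
      Finset.sum_nonneg fun i _ => norm_nonneg _, fun i u => ?_⟩
    have h1 : ‖grad i u‖ ≤ ‖(grad i).toContinuousLinearMap‖ * ‖u‖ := by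
      simpa using ((grad i).toContinuousLinearMap).le_opNorm u
    have h2 : ‖(grad i).toContinuousLinearMap‖ ≤ ∑ i : I, ‖(grad i).toContinuousLinearMap‖ :=
      Finset.single_le_sum (f := fun i : I => ‖(grad i).toContinuousLinearMap‖)
        (fun j _ => norm_nonneg _) (Finset.mem_univ i)
    calc ‖grad i u‖ ≤ ‖(grad i).toContinuousLinearMap‖ * ‖u‖ := h1
      _ ≤ (∑ i : I, ‖(grad i).toContinuousLinearMap‖) * ‖u‖ :=
        mul_le_mul_of_nonneg_right h2 (norm_nonneg u)
  set c' := max c 0 with hc'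
  have hc'0 : 0 ≤ c' := le_max_right _ _
  set B0 := Real.sqrt (2 * c') with hB0
  set Ru := Cf * (B0 + ‖u0‖) with hRu
  set B1 := Real.sqrt (2 * c' / μ) with hB1
  set Rl := Cg * Ru + B1 with hRl
  have hRu0 : 0 ≤ Ru := by positivity
  have hRl0 : 0 ≤ Rl := by positivity
  apply (Metric.isBounded_closedBall (x := (0 : EuclideanSpace ℝ (Fin n) × (I → EuclideanSpace ℝ (Fin 2)))) (r := max Ru Rl)).subset
  rintro ⟨u, l⟩ hp
  simp only [Set.mem_setOf_eq] at hp
  rw [hLGY] at hp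
  -- nonnegativity of each summand
  have hterm : ∀ i : I, 0 ≤ (μ / 2) * ‖grad i u - l i‖ ^ 2 +
      μ * (if ‖l i‖ ≤ Real.sqrt (lam / μ) then
            Real.sqrt (lam / μ) * ‖l i‖ - ‖l i‖ ^ 2 / 2
          else (lam / μ) / 2) := by
    intro i
    have h1 : 0 ≤ (μ / 2) * ‖grad i u - l i‖ ^ 2 := by positivity
    have h2 : 0 ≤ (if ‖l i‖ ≤ Real.sqrt (lam / μ) then
            Real.sqrt (lam / μ) * ‖l i‖ - ‖l i‖ ^ 2 / 2
          else (lam / μ) / 2) := by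
      split
      · nlinarith [norm_nonneg (l i)]
      · positivity
    nlinarith
  have hsum : 0 ≤ ∑ i : I, ((μ / 2) * ‖grad i u - l i‖ ^ 2 +
      μ * (if ‖l i‖ ≤ Real.sqrt (lam / μ) then
            Real.sqrt (lam / μ) * ‖l i‖ - ‖l i‖ ^ 2 / 2
          else (lam / μ) / 2)) := Finset.sum_nonneg fun i _ => hterm i
  have hfst : (1 / 2) * ‖A u - u0‖ ^ 2 ≤ c' := by
    have := le_max_left c 0
    linarith
  have hAubd : ‖A u - u0‖ ≤ B0 := by
    have hs := Real.sq_sqrt (by positivity : (0:ℝ) ≤ 2 * c')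
    nlinarith [Real.sqrt_nonneg (2 * c'), norm_nonneg (A u - u0)]
  have hu : ‖u‖ ≤ Ru := by
    have h1 : ‖A u‖ ≤ B0 + ‖u0‖ := by
      have h2 := norm_sub_norm_le (A u) u0
      linarith
    calc ‖u‖ ≤ Cf * ‖A u‖ := hAu u
      _ ≤ Cf * (B0 + ‖u0‖) := by
        apply mul_le_mul_of_nonneg_left h1 hCf0
  have hli : ∀ i : I, ‖l i‖ ≤ Rl := by
    intro i
    have hi : (μ / 2) * ‖grad i u - l i‖ ^ 2 ≤ c' := by
      have h1 : (μ / 2) * ‖grad i u - l i‖ ^ 2 ≤ (μ / 2) * ‖grad i u - l i‖ ^ 2 +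
          μ * (if ‖l i‖ ≤ Real.sqrt (lam / μ) then
                Real.sqrt (lam / μ) * ‖l i‖ - ‖l i‖ ^ 2 / 2
              else (lam / μ) / 2) := by
        have := hterm i
        have h2 : 0 ≤ μ * (if ‖l i‖ ≤ Real.sqrt (lam / μ) then
                Real.sqrt (lam / μ) * ‖l i‖ - ‖l i‖ ^ 2 / 2
              else (lam / μ) / 2) := by
          apply mul_nonneg hμ.le
          split
          · nlinarith [norm_nonneg (l i)]
          · positivity
        linarith
      have h3 := Finset.single_le_sum (f := fun i => (μ / 2) * ‖grad i u - l i‖ ^ 2 +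
          μ * (if ‖l i‖ ≤ Real.sqrt (lam / μ) then
                Real.sqrt (lam / μ) * ‖l i‖ - ‖l i‖ ^ 2 / 2
              else (lam / μ) / 2)) (fun j _ => hterm j) (Finset.mem_univ i)
      have h4 : 0 ≤ (1 / 2) * ‖A u - u0‖ ^ 2 := by positivity
      have := le_max_left c 0
      linarith
    have hdiff : ‖grad i u - l i‖ ≤ B1 := by
      have hx2 : ‖grad i u - l i‖ ^ 2 ≤ 2 * c' / μ := by
        rw [le_div_iff₀ hμ]; nlinarith
      have hs := Real.sq_sqrt (by positivity : (0:ℝ) ≤ 2 * c' / μ)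
      nlinarith [Real.sqrt_nonneg (2 * c' / μ), norm_nonneg (grad i u - l i)]
    have hg : ‖grad i u‖ ≤ Cg * Ru := by
      calc ‖grad i u‖ ≤ Cg * ‖u‖ := hCgi i u
        _ ≤ Cg * Ru := mul_le_mul_of_nonneg_left hu hCg0
    have h6 : ‖l i‖ - ‖grad i u‖ ≤ ‖l i - grad i u‖ := norm_sub_norm_le _ _
    rw [norm_sub_rev] at h6
    linarith
  rw [Metric.mem_closedBall, dist_zero_right, Prod.norm_def]
  apply max_le
  · exact le_trans hu (le_max_left _ _)
  · rw [pi_norm_le_iff_of_nonneg (le_trans hRl0 (le_max_right Ru Rl))]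
    intro i
    exact le_trans (hli i) (le_max_right _ _)
end
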